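/- The Max Swap Game on a tree with n vertices under the max cost policy converges to a stable tree within O(n log n) moves: each agent, once it becomes a maximum-cost agent with eccentricity c, can perform at most O(log c) best-response moves before reaching eccentricity at most 3, since each best-response swap of a leaf agent with eccentricity c reduces its eccentricity to at most ⌈c/2⌉ + 1. -/

import Mathlib

namespace NCG
open SimpleGraph

variable {V : Type*}

/-- Eccentricity of a vertex: maximum graph distance to any other vertex. -/
noncomputable def ecc [Fintype V] (G : SimpleGraph V) (x : V) : ℕ :=
  Finset.univ.sup fun y => G.dist x y

/-- Diameter: maximum eccentricity. -/
noncomputable def diam [Fintype V] (G : SimpleGraph V) : ℕ :=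
  Finset.univ.sup fun x => ecc G x

/-- Radius: minimum eccentricity. -/
noncomputable def rad [Fintype V] (G : SimpleGraph V) : ℕ :=
  sInf (Set.range (ecc G))

/-- A swap move of agent v: replace one incident tree edge {v,u} by {v,w},
keeping the network a tree. -/
def IsSwapMove [Fintype V] (T T' : SimpleGraph V) (v : V) : Prop :=
  T'.IsTree ∧ ∃ u w : V, T.Adj v u ∧
    T'.edgeSet = (T.edgeSet \ {s(v, u)}) ∪ {s(v, w)}

/-- An improving move: a swap strictly decreasing the mover's eccentricity. -/
def IsImproving [Fintype V] (T T' : SimpleGraph V) (v : V) : Prop :=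
  IsSwapMove T T' v ∧ ecc T' v < ecc T v

/-- An agent is unhappy if it has an improving swap. -/
def Unhappy [Fintype V] (T : SimpleGraph V) (v : V) : Prop :=
  ∃ T', IsImproving T T' v

/-- A tree is stable if no agent has an improving swap. -/
def Stable [Fintype V] (T : SimpleGraph V) : Prop :=
  ∀ v, ¬ Unhappy T v

/-- A step of the Max Swap Game under the max cost policy: an unhappy agent of
maximum cost among unhappy agents performs a best-response improving swap. -/
def MaxCostBRStep [Fintype V] (T T' : SimpleGraph V) : Prop :=
  ∃ v, Unhappy T v ∧ (∀ x, Unhappy T x → ecc T x ≤ ecc T v) ∧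
    IsImproving T T' v ∧
    ∀ T'', IsImproving T T'' v → ecc T' v ≤ ecc T'' v

section AuxProof
open SimpleGraph.Walk
variable {G G' : SimpleGraph V}

lemma isPath_append {a b c : V} {p : G.Walk a b} {q : G.Walk b c}
    (hp : p.IsPath) (hq : q.IsPath)
    (h : ∀ x ∈ p.support, x ∈ q.support → x = b) : (p.append q).IsPath := by
  rw [Walk.isPath_def, Walk.support_append]
  have hq' := hq.support_nodup
  rw [q.support_eq_cons] at hq'
  rcases List.nodup_cons.1 hq' with ⟨hbt, htn⟩
  refine List.Nodup.append hp.support_nodup htn ?_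
  intro x hx hx'
  have : x = b := h x hx (q.support_eq_cons ▸ List.mem_cons_of_mem _ hx')
  exact hbt (this ▸ hx')

lemma tree_path_length (hT : G.IsTree) {x y : V} {p : G.Walk x y} (hp : p.IsPath) :
    p.length = G.dist x y := by
  obtain ⟨q, hq, hql⟩ := hT.isConnected.exists_path_of_dist x y
  rw [(hT.existsUnique_path x y).unique hp hq, hql]

lemma exists_split {x y : V} (k : ℕ) :
    ∀ (p : G.Walk x y), k ≤ p.length →
    ∃ (m : V) (p₁ : G.Walk x m) (p₂ : G.Walk m y), p₁.append p₂ = p ∧ p₁.length = k := by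
  induction k generalizing x with
  | zero => exact fun p _ => ⟨x, Walk.nil, p, by simp, rfl⟩
  | succ k ih =>
    intro p hk
    cases p with
    | nil => simp at hk
    | cons h r =>
      obtain ⟨m, p₁, p₂, hap, hl⟩ := ih r (by simpa using hk)
      exact ⟨m, Walk.cons h p₁, p₂, by simp [hap], by simp [hl]⟩

lemma exists_firstmeet {S : Set V} [DecidablePred (· ∈ S)] {z x : V} :
    ∀ (q : G.Walk z x), x ∈ S →
    ∃ (t : V) (q₁ : G.Walk z t) (q₂ : G.Walk t x), t ∈ S ∧
      (∀ a ∈ q₁.support, a ∈ S → a = t) ∧ q₁.append q₂ = q := by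
  intro q
  induction q with
  | nil => exact fun hx => ⟨_, Walk.nil, Walk.nil, hx, fun a ha _ => by simpa using ha, rfl⟩
  | @cons u v w h r ih =>
    intro hx
    by_cases hu : u ∈ S
    · exact ⟨u, Walk.nil, Walk.cons h r, hu, fun a ha _ => by simpa using ha, rfl⟩
    · obtain ⟨t, q₁, q₂, ht, hq₁, hap⟩ := ih hx
      refine ⟨t, Walk.cons h q₁, q₂, ht, ?_, by simp [hap]⟩
      intro a ha haS
      rw [Walk.support_cons, List.mem_cons] at ha
      rcases ha with rfl | ha
      · exact absurd haS hu
      · exact hq₁ a ha haS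

/-- Center theorem: the midpoint of a path `p` whose endpoints are "peripheral"
(every vertex is within `p.length` of both endpoints) is within `⌈p.length/2⌉`
of every vertex. -/
lemma center_bound (hT : G.IsTree) {x y : V} (p : G.Walk x y) (hp : p.IsPath)
    (hd : ∀ z, G.dist x z ≤ p.length ∧ G.dist y z ≤ p.length) :
    ∃ m : V, ∀ z : V, G.dist m z ≤ (p.length + 1) / 2 := by
  classical
  set D := p.length with hD
  obtain ⟨m, p₁, p₂, hap, hl1⟩ := exists_split (D / 2) p (Nat.div_le_self _ _)
  have hp1 : p₁.IsPath := (hap ▸ hp).of_append_left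
  have hp2 : p₂.IsPath := (hap ▸ hp).of_append_right
  have hl2 : p₂.length = D - D / 2 := by
    have := congrArg Walk.length hap
    rw [Walk.length_append] at this
    omega
  refine ⟨m, fun z => ?_⟩
  obtain ⟨q, hq, hql⟩ := hT.isConnected.exists_path_of_dist z x
  obtain ⟨t, q₁, q₂, ht, hmeet, happ⟩ :=
    exists_firstmeet (S := {a | a ∈ p.support}) q p.start_mem_support
  have hq₁ : q₁.IsPath := (happ ▸ hq).of_append_left
  have htp : t ∈ p.support := ht
  rw [← hap, Walk.mem_support_append_iff] at htp
  have tri := hT.isConnected.dist_triangle (u := m) (v := t) (w := z)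
  have hc1 : G.dist m t = G.dist t m := dist_comm
  have hc2 : G.dist t z = G.dist z t := dist_comm
  rcases htp with ht1 | ht2
  · -- t on the first half
    set α := (p₁.takeUntil t ht1).length with hα
    have hsplit1 := p₁.take_spec ht1
    have hlsum : α + (p₁.dropUntil t ht1).length = D / 2 := by
      have := congrArg Walk.length hsplit1
      rw [Walk.length_append] at this; omega
    have heq : ((p₁.takeUntil t ht1).append ((p₁.dropUntil t ht1).append p₂)) = p := by
      rw [Walk.append_assoc, hsplit1, hap]
    have hpr : ((p₁.dropUntil t ht1).append p₂).IsPath := (heq ▸ hp).of_append_right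
    have hzy : (q₁.append ((p₁.dropUntil t ht1).append p₂)).IsPath := by
      refine isPath_append hq₁ hpr ?_
      intro a ha ha'
      refine hmeet a ha ?_
      show a ∈ p.support
      rw [← heq, Walk.mem_support_append_iff]
      right; exact ha'
    have hlen := tree_path_length hT hzy
    rw [Walk.length_append, Walk.length_append] at hlen
    have hdzy : G.dist z y ≤ D := by
      rw [show G.dist z y = G.dist y z from dist_comm]; exact (hd z).2
    have hq1l := tree_path_length hT hq₁
    have hdtm : G.dist t m = D / 2 - α := by
      rw [← tree_path_length hT (hp1.dropUntil ht1)]; omega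
    omega
  · -- t on the second half
    set γ := (p₂.takeUntil t ht2).length with hγ
    have hsplit2 := p₂.take_spec ht2
    have hlsum : γ + (p₂.dropUntil t ht2).length = D - D / 2 := by
      have := congrArg Walk.length hsplit2
      rw [Walk.length_append] at this; omega
    have heq : ((p₁.append (p₂.takeUntil t ht2)).append (p₂.dropUntil t ht2)) = p := by
      rw [← Walk.append_assoc, hsplit2, hap]
    have hpxt : (p₁.append (p₂.takeUntil t ht2)).IsPath := (heq ▸ hp).of_append_left
    have hztx : (q₁.append (p₁.append (p₂.takeUntil t ht2)).reverse).IsPath := by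
      refine isPath_append hq₁ hpxt.reverse ?_
      intro a ha ha'
      rw [Walk.support_reverse, List.mem_reverse] at ha'
      refine hmeet a ha ?_
      show a ∈ p.support
      rw [← heq, Walk.mem_support_append_iff]
      left; exact ha'
    have hlen := tree_path_length hT hztx
    rw [Walk.length_append, Walk.length_reverse, Walk.length_append] at hlen
    have hdzx : G.dist z x ≤ D := by
      rw [show G.dist z x = G.dist x z from dist_comm]; exact (hd z).1
    have hq1l := tree_path_length hT hq₁
    have hdtm : G.dist m t = γ := by
      rw [← tree_path_length hT (hp2.takeUntil ht2)]
    have hgoal : G.dist m z = G.dist m z := rfl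
    omega

lemma leaf_not_mem_path_support {v u : V} (hleaf : ∀ a, G.Adj v a → a = u) :
    ∀ {x y : V} (p : G.Walk x y), p.IsPath → x ≠ v → y ≠ v → v ∉ p.support := by
  intro x y p
  induction p with
  | nil =>
    intro _ hx _ hv
    simp only [Walk.support_nil, List.mem_singleton] at hv
    exact hx hv.symm
  | @cons a b c h r ih =>
    intro hp ha hc hmem
    rw [Walk.support_cons, List.mem_cons] at hmem
    rcases hmem with hva | hmem
    · exact ha hva.symm
    · by_cases hb : b = v
      · subst hb
        have hau : a = u := hleaf a h.symm
        cases r with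
        | nil => exact hc rfl
        | @cons _ b' _ h' r' =>
          have hb'u : b' = u := hleaf b' h'
          have : a ∈ (Walk.cons h' r').support := by
            rw [Walk.support_cons, List.mem_cons]
            right
            rw [hau, ← hb'u]
            exact r'.start_mem_support
          exact ((Walk.cons_isPath_iff _ _).1 hp).2 this
      · exact ih ((Walk.cons_isPath_iff _ _).1 hp).1 (Ne.intro hb) hc hmem

lemma leaf_dist (hT : G.IsTree) {v u : V} (hleaf : ∀ a, G.Adj v a → a = u)
    {t : V} (ht : t ≠ v) : G.dist v t = G.dist u t + 1 := by
  obtain ⟨p, hp, hl⟩ := hT.isConnected.exists_path_of_dist v t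
  cases p with
  | nil => exact absurd rfl ht.symm
  | @cons _ b _ h r =>
    have hb : b = u := hleaf b h
    have hr : r.length = G.dist b t := tree_path_length hT ((Walk.cons_isPath_iff _ _).1 hp).1
    rw [Walk.length_cons, hr] at hl
    rw [← hb]
    omega

lemma dist_le_of_leaf_agree (hGc : G.Connected) {v u : V} (hleaf : ∀ a, G.Adj v a → a = u)
    (hagree : ∀ e ∈ G.edgeSet, v ∉ e → e ∈ G'.edgeSet) {x y : V} (hx : x ≠ v) (hy : y ≠ v) :
    G'.dist x y ≤ G.dist x y := by
  obtain ⟨p, hp, hl⟩ := hGc.exists_path_of_dist x y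
  have hvp : v ∉ p.support := leaf_not_mem_path_support hleaf p hp hx hy
  have hed : ∀ e ∈ p.edges, e ∈ G'.edgeSet := by
    intro e he
    refine hagree e (p.edges_subset_edgeSet he) ?_
    intro hve
    induction e with
    | _ a b =>
      rw [Sym2.mem_iff] at hve
      rcases hve with rfl | rfl
      · exact hvp (p.fst_mem_support_of_mem_edges he)
      · exact hvp (p.snd_mem_support_of_mem_edges he)
  calc G'.dist x y ≤ (p.transfer G' hed).length := SimpleGraph.dist_le _
    _ = p.length := by simp
    _ = G.dist x y := hl

lemma swap_tree [Nonempty V] (hT : G.IsTree) {v u m : V} (hvu : G.Adj v u)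
    (hleaf : ∀ a, G.Adj v a → a = u) (hm : m ≠ v) :
    ∃ G' : SimpleGraph V, G'.IsTree ∧
      G'.edgeSet = (G.edgeSet \ {s(v,u)}) ∪ {s(v,m)} ∧ (∀ a, G'.Adj v a → a = m) ∧ G'.Adj v m := by
  classical
  set S : Set (Sym2 V) := (G.edgeSet \ {s(v,u)}) ∪ {s(v,m)} with hS
  set G' := SimpleGraph.fromEdgeSet S with hG'
  have hES : G'.edgeSet = S := by
    rw [hG', edgeSet_fromEdgeSet]
    apply sdiff_eq_left.2
    rw [Set.disjoint_left]
    intro e he hdiag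
    rcases he with ⟨hge, -⟩ | he
    · exact G.not_isDiag_of_mem_edgeSet hge hdiag
    · rw [Set.mem_singleton_iff] at he
      subst he
      rw [Sym2.mem_diagSet, Sym2.mk_isDiag_iff] at hdiag
      exact hm hdiag.symm
  have hvleaf' : ∀ a, G'.Adj v a → a = m := by
    intro a ha
    rw [hG', fromEdgeSet_adj] at ha
    rcases ha.1 with ⟨hge, hne⟩ | hsm
    · exfalso
      apply hne
      rw [Set.mem_singleton_iff, hleaf a hge]
    · rw [Set.mem_singleton_iff, Sym2.congr_right] at hsm
      exact hsm
  have hadjvm : G'.Adj v m := by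
    rw [hG', fromEdgeSet_adj]
    exact ⟨Or.inr rfl, hm.symm⟩
  have hedtrans : ∀ {a b : V} (p : G.Walk a b), v ∉ p.support →
      ∀ e ∈ p.edges, e ∈ G'.edgeSet := by
    intro a b p hvp e he
    have hvne : v ∉ e := by
      intro hve
      induction e with
      | _ c d =>
        rw [Sym2.mem_iff] at hve
        rcases hve with rfl | rfl
        · exact hvp (p.fst_mem_support_of_mem_edges he)
        · exact hvp (p.snd_mem_support_of_mem_edges he)
    rw [hES]
    left
    refine ⟨p.edges_subset_edgeSet he, ?_⟩
    intro hevu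
    rw [Set.mem_singleton_iff] at hevu
    subst hevu
    exact hvne (Sym2.mem_mk_left v u)
  have hreach : ∀ a b : V, a ≠ v → b ≠ v → G'.Reachable a b := by
    intro a b ha hb
    obtain ⟨p, hp, -⟩ := hT.isConnected.exists_path_of_dist a b
    exact ⟨p.transfer G' (hedtrans p (leaf_not_mem_path_support hleaf p hp ha hb))⟩
  have hmv : v ≠ m := hm.symm
  have hconn : G'.Connected := by
    rw [connected_iff]
    refine ⟨?_, inferInstance⟩
    intro a b
    by_cases ha : a = v
    · by_cases hb : b = v
      · rw [ha, hb]
      · rw [ha]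
        exact (hadjvm.reachable).trans (hreach m b hm (Ne.intro hb))
    · by_cases hb : b = v
      · rw [hb]
        exact ((hadjvm.reachable).trans (hreach m a hm (Ne.intro ha))).symm
      · exact hreach a b (Ne.intro ha) (Ne.intro hb)
  have hacyc : G'.IsAcyclic := by
    intro a c hc
    by_cases hvc : v ∈ c.support
    · have hc' := hc.rotate hvc
      obtain ⟨b₁, h', r', hdeq⟩ := Walk.not_nil_iff.1 hc'.not_nil
      rw [hdeq] at hc'
      have hb1 : b₁ = m := hvleaf' _ h'
      have hr'path : r'.IsPath := by
        rw [Walk.isPath_def]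
        have := ((Walk.isCycle_def _).1 hc').2.2
        rwa [Walk.support_cons, List.tail_cons] at this
      have hvb1 : v ≠ b₁ := h'.ne
      obtain ⟨b₂, h₂, r₂, hre⟩ := (Walk.not_nil_iff (p := r'.reverse)).1
        (Walk.not_nil_of_ne hvb1)
      have hb2 : b₂ = m := hvleaf' _ h₂
      have hr₂path : r₂.IsPath := by
        have := hr'path.reverse
        rw [hre] at this
        exact ((Walk.cons_isPath_iff _ _).1 this).1
      have hlen0 : r₂.length = 0 := by
        have hbb : b₂ = b₁ := by rw [hb2, hb1]
        subst hbb
        rw [Walk.isPath_iff_eq_nil.1 hr₂path]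
        rfl
      have h3 := hc'.three_le_length
      have hlr : r'.length = r₂.length + 1 := by
        have := congrArg Walk.length hre
        rwa [Walk.length_reverse, Walk.length_cons] at this
      rw [Walk.length_cons] at h3
      omega
    · exact hT.IsAcyclic (c.transfer G (by
        intro e he
        have heG' : e ∈ G'.edgeSet := c.edges_subset_edgeSet he
        rw [hES] at heG'
        rcases heG' with ⟨hge, -⟩ | hevm
        · exact hge
        · exfalso
          rw [Set.mem_singleton_iff] at hevm
          subst hevm
          exact hvc (c.fst_mem_support_of_mem_edges he)))
        (hc.transfer _)
  exact ⟨G', ⟨hconn, hacyc⟩, hES, hvleaf', hadjvm⟩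

section EccLemmas
variable [Fintype V]

lemma dist_le_ecc {x y : V} : G.dist x y ≤ ecc G x := Finset.le_sup (Finset.mem_univ y)

lemma ecc_le {x : V} {k : ℕ} : ecc G x ≤ k ↔ ∀ y, G.dist x y ≤ k := by
  unfold ecc
  rw [Finset.sup_le_iff]
  simp

lemma ecc_le_diam {x : V} : ecc G x ≤ diam G := Finset.le_sup (Finset.mem_univ x)

lemma diam_le {k : ℕ} : diam G ≤ k ↔ ∀ x, ecc G x ≤ k := by
  unfold diam
  rw [Finset.sup_le_iff]
  simp

lemma exists_ecc [Nonempty V] (x : V) : ∃ y, ecc G x = G.dist x y := by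
  obtain ⟨y, -, hy⟩ :=
    Finset.exists_mem_eq_sup Finset.univ Finset.univ_nonempty (fun y => G.dist x y)
  exact ⟨y, hy⟩

lemma exists_diam [Nonempty V] : ∃ x, diam G = ecc G x := by
  obtain ⟨x, -, hx⟩ :=
    Finset.exists_mem_eq_sup Finset.univ Finset.univ_nonempty (fun x => ecc G x)
  exact ⟨x, hx⟩

lemma ecc_le_card (hc : G.Connected) (x : V) : ecc G x ≤ Fintype.card V - 1 := by
  rw [ecc_le]
  intro y
  obtain ⟨p, hp, hl⟩ := hc.exists_path_of_dist x y
  have := hp.length_lt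
  omega

lemma adj_of_dist_le_one (hc : G.Connected) {x y : V} (hxy : x ≠ y) (h : G.dist x y ≤ 1) :
    G.Adj x y := by
  have hpos := hc.pos_dist_of_ne hxy
  exact (dist_eq_one_iff_adj (G := G)).1 (by omega)

lemma no_triangle (hT : G.IsTree) {a b c : V} (hab : G.Adj a b) (hac : G.Adj a c)
    (hcb : G.Adj c b) : False := by
  have hp₁ : (Walk.cons hab Walk.nil).IsPath := by simp [hab.ne]
  have hp₂ : (Walk.cons hac (Walk.cons hcb Walk.nil)).IsPath := by
    simp [hac.ne, hab.ne, hcb.ne]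
  have := isAcyclic_iff_path_unique.1 hT.IsAcyclic ⟨_, hp₁⟩ ⟨_, hp₂⟩
  have hlen := congrArg (fun P : G.Path a b => P.1.length) this
  simp at hlen

lemma edge_with_center (hT : G.IsTree) {v : V} (hv : ∀ y, y ≠ v → G.Adj v y) {a b : V}
    (hab : G.Adj a b) : a = v ∨ b = v := by
  by_contra h
  push_neg at h
  exact no_triangle hT hab ((hv a h.1).symm) (hv b h.2)

lemma two_le_diam (hT : G.IsTree) (h3 : 3 ≤ Fintype.card V) : 2 ≤ diam G := by
  by_contra h
  push_neg at h
  have hadj : ∀ x y : V, x ≠ y → G.Adj x y := by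
    intro x y hxy
    refine adj_of_dist_le_one hT.isConnected hxy ?_
    have h1 : G.dist x y ≤ diam G := le_trans dist_le_ecc ecc_le_diam
    omega
  obtain ⟨a, b, c, hab, hac, hbc⟩ := Fintype.two_lt_card_iff.1
    (by omega : 2 < Fintype.card V)
  exact no_triangle hT (hadj a b hab) (hadj a c hac) (hadj c b hbc.symm)

lemma ecc_le_of_leaf (hT : G.IsTree) {v u : V} (hleaf : ∀ a, G.Adj v a → a = u) {k : ℕ}
    (hk : ∀ t, G.dist u t ≤ k) : ecc G v ≤ k + 1 := by
  rw [ecc_le]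
  intro t
  by_cases ht : t = v
  · rw [ht, SimpleGraph.dist_self]
    omega
  · rw [leaf_dist hT hleaf (Ne.intro ht)]
    have := hk t
    omega

lemma leaf_of_max_ecc (hT : G.IsTree) {v : V} (h2 : 2 ≤ ecc G v)
    (hvmax : ∀ x, ecc G x ≤ ecc G v) :
    ∃ u, G.Adj v u ∧ ∀ a, G.Adj v a → a = u := by
  classical
  have : Nonempty V := ⟨v⟩
  obtain ⟨y, hy⟩ := exists_ecc (G := G) v
  obtain ⟨p, hp, hpl⟩ := hT.isConnected.exists_path_of_dist v y
  cases p with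
  | nil =>
    rw [← hpl] at hy
    simp at hy
    omega
  | @cons _ c _ h r =>
    refine ⟨c, h, fun a ha => ?_⟩
    by_contra hac
    obtain ⟨q, hq, hql⟩ := hT.isConnected.exists_path_of_dist a y
    by_cases hvq : v ∈ q.support
    · -- going through v is too long
      have h1 : (q.takeUntil v hvq).length = G.dist a v :=
        tree_path_length hT (hq.takeUntil hvq)
      have h2' : (q.dropUntil v hvq).length = G.dist v y :=
        tree_path_length hT (hq.dropUntil hvq)
      have hsum := congrArg Walk.length (q.take_spec hvq)
      rw [Walk.length_append, h1, h2'] at hsum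
      have hpos : 0 < G.dist a v := hT.isConnected.pos_dist_of_ne ha.ne'
      have hle : G.dist a y ≤ ecc G v := le_trans dist_le_ecc (hvmax a)
      rw [hy] at hle
      omega
    · -- unique path forces a = c
      have hpath : (Walk.cons ha q).IsPath := hq.cons hvq
      have hequ := (hT.existsUnique_path v y).unique hpath hp
      have := congrArg (fun w : G.Walk v y => w.getVert 1) hequ
      exact hac (by simpa using this)

end EccLemmas

section Game
variable [Fintype V] {T T' : SimpleGraph V}

/-- In a star (tree with a universal vertex), nobody is unhappy. -/
lemma star_no_unhappy (hT : T.IsTree) {v : V} (hv : ∀ y, y ≠ v → T.Adj v y) (x : V) :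
    ¬ Unhappy T x := by
  rintro ⟨T₃, ⟨hT₃, uu, ww, hxuu, hE⟩, hecc⟩
  -- ecc T x ≤ 2
  have h2 : ecc T x ≤ 2 := by
    rw [ecc_le]
    intro y
    by_cases hxy : x = y
    · rw [hxy, SimpleGraph.dist_self]; omega
    by_cases hxv : x = v
    · subst hxv
      exact le_trans (SimpleGraph.dist_le (Walk.cons (hv y (Ne.intro fun h => hxy h.symm)) Walk.nil)) (by norm_num)
    by_cases hyv : y = v
    · subst hyv
      exact le_trans (SimpleGraph.dist_le (Walk.cons (hv x (Ne.intro hxv)).symm Walk.nil)) (by norm_num)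
    · exact le_trans (SimpleGraph.dist_le (Walk.cons (hv x (Ne.intro hxv)).symm
        (Walk.cons (hv y (Ne.intro hyv)) Walk.nil))) (by norm_num)
  have hcls : ∀ a, T₃.Adj x a → (T.Adj x a ∧ s(x,a) ≠ s(x,uu)) ∨ a = ww := by
    intro a ha
    have hmem : s(x,a) ∈ T₃.edgeSet := ha
    rw [hE] at hmem
    rcases hmem with ⟨hg, hne⟩ | hsm
    · left
      exact ⟨hg, by simpa using hne⟩
    · right
      rwa [Set.mem_singleton_iff, Sym2.congr_right] at hsm
  rcases Nat.lt_or_ge (ecc T₃ x) 1 with h0 | h1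
  · -- ecc T₃ x = 0 : impossible since then V = {x}
    have hTx0 : ecc T x = 0 := by
      rw [← Nat.le_zero, ecc_le]
      intro y
      have hd3 : T₃.dist x y = 0 := by
        have := dist_le_ecc (G := T₃) (x := x) (y := y)
        omega
      have : x = y := (hT₃.isConnected.dist_eq_zero_iff).1 hd3
      rw [← this, SimpleGraph.dist_self]
    omega
  · have he3 : ecc T₃ x = 1 := by omega
    have heG : ecc T x = 2 := by omega
    have hxv : x ≠ v := by
      intro hxv
      subst hxv
      have : ecc T x ≤ 1 := by
        rw [ecc_le]
        intro y
        by_cases hxy : x = y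
        · rw [hxy, SimpleGraph.dist_self]; omega
        · exact SimpleGraph.dist_le (Walk.cons (hv y (Ne.intro fun h => hxy h.symm)) Walk.nil)
      omega
    have : Nonempty V := ⟨x⟩
    obtain ⟨y₀, hy₀⟩ := exists_ecc (G := T) x
    rw [heG] at hy₀
    have hxy₀ : x ≠ y₀ := by
      intro h
      rw [← h, SimpleGraph.dist_self] at hy₀
      omega
    have hvy₀ : v ≠ y₀ := by
      intro h
      subst h
      have : T.dist x v ≤ 1 := SimpleGraph.dist_le (Walk.cons (hv x (Ne.intro hxv)).symm Walk.nil)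
      omega
    have hnadj : ¬ T.Adj x y₀ := by
      intro h
      have : T.dist x y₀ ≤ 1 := SimpleGraph.dist_le (Walk.cons h Walk.nil)
      omega
    have huu : uu = v := by
      rcases edge_with_center hT hv hxuu with h | h
      · exact absurd h hxv
      · exact h
    -- T₃.Adj x y₀
    have hady₀ : T₃.Adj x y₀ := by
      refine adj_of_dist_le_one hT₃.isConnected hxy₀ ?_
      have := dist_le_ecc (G := T₃) (x := x) (y := y₀)
      omega
    have hy₀ww : y₀ = ww := by
      rcases hcls y₀ hady₀ with ⟨hg, -⟩ | h
      · exact absurd hg hnadj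
      · exact h
    have hadv : T₃.Adj x v := by
      refine adj_of_dist_le_one hT₃.isConnected hxv ?_
      have := dist_le_ecc (G := T₃) (x := x) (y := v)
      omega
    rcases hcls v hadv with ⟨-, hne⟩ | h
    · rw [huu] at hne
      exact hne rfl
    · rw [hy₀ww] at hvy₀
      exact hvy₀ h

/-- A vertex with eccentricity ≤ 1 in a connected graph is universal. -/
lemma univ_of_ecc_le_one (hc : T.Connected) {v : V} (h1 : ecc T v ≤ 1) :
    ∀ y, y ≠ v → T.Adj v y := by
  intro y hy
  refine adj_of_dist_le_one hc (Ne.symm hy) ?_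
  · have := dist_le_ecc (G := T) (x := v) (y := y)
    omega

lemma unhappy_two_le_ecc (h1 : 1 < Fintype.card V) {v : V} (hU : Unhappy T v) :
    2 ≤ ecc T v := by
  obtain ⟨T₃, ⟨hT₃, -⟩, himp⟩ := hU
  obtain ⟨y, hy⟩ := Fintype.exists_ne_of_one_lt_card h1 v
  have hpos : 0 < T₃.dist v y := hT₃.isConnected.pos_dist_of_ne (Ne.symm hy)
  have := dist_le_ecc (G := T₃) (x := v) (y := y)
  omega

end Game


/-- Halving bound for best responses at diameter `D`. -/
def KK (D : ℕ) : ℕ := if D ≤ 3 then 2 else (D + 1) / 2 + 1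

lemma KK_mono {D D' : ℕ} (h : D ≤ D') : KK D ≤ KK D' := by
  unfold KK
  split <;> split <;> omega

lemma two_le_KK (D : ℕ) : 2 ≤ KK D := by
  unfold KK
  split <;> omega

lemma KK_lt {D : ℕ} (h : 3 ≤ D) : KK D < D := by
  unfold KK
  split <;> omega

section Game2
variable [Fintype V] {T T' : SimpleGraph V}

lemma swap_leaf' {v u w : V} (hleaf : ∀ a, T.Adj v a → a = u)
    (hE : T'.edgeSet = (T.edgeSet \ {s(v,u)}) ∪ {s(v,w)}) :
    ∀ a, T'.Adj v a → a = w := by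
  intro a ha
  have hmem : s(v,a) ∈ T'.edgeSet := ha
  rw [hE] at hmem
  rcases hmem with ⟨hg, hne⟩ | hsm
  · exfalso
    apply hne
    rw [Set.mem_singleton_iff, hleaf a hg]
  · rwa [Set.mem_singleton_iff, Sym2.congr_right] at hsm

lemma swap_dist_eq (hT : T.IsTree) (hT' : T'.IsTree) {v u w : V}
    (hleaf : ∀ a, T.Adj v a → a = u)
    (hE : T'.edgeSet = (T.edgeSet \ {s(v,u)}) ∪ {s(v,w)}) {x y : V}
    (hx : x ≠ v) (hy : y ≠ v) : T'.dist x y = T.dist x y := by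
  have hleaf' := swap_leaf' hleaf hE
  apply le_antisymm
  · refine dist_le_of_leaf_agree hT.isConnected hleaf ?_ hx hy
    intro e he hve
    rw [hE]
    left
    refine ⟨he, ?_⟩
    intro hevu
    rw [Set.mem_singleton_iff] at hevu
    exact hve (hevu ▸ Sym2.mem_mk_left v u)
  · refine dist_le_of_leaf_agree hT'.isConnected hleaf' ?_ hx hy
    intro e he hve
    rw [hE] at he
    rcases he with ⟨hg, -⟩ | hevw
    · exact hg
    · exfalso
      rw [Set.mem_singleton_iff] at hevw
      exact hve (hevw ▸ Sym2.mem_mk_left v w)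

lemma swap_ecc_le (hT : T.IsTree) (hT' : T'.IsTree) {v u w : V}
    (hleaf : ∀ a, T.Adj v a → a = u)
    (hE : T'.edgeSet = (T.edgeSet \ {s(v,u)}) ∪ {s(v,w)}) (x : V) :
    ecc T' x ≤ max (ecc T x) (ecc T' v) := by
  by_cases hx : x = v
  · rw [hx]
    exact le_max_right _ _
  rw [ecc_le]
  intro y
  by_cases hy : y = v
  · rw [hy, show T'.dist x v = T'.dist v x from dist_comm]
    exact le_trans dist_le_ecc (le_max_right _ _)
  · rw [swap_dist_eq hT hT' hleaf hE (Ne.intro hx) (Ne.intro hy)]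
    exact le_trans dist_le_ecc (le_max_left _ _)

lemma univ_diam_le_two {v : V} (hv : ∀ y, y ≠ v → T.Adj v y) : diam T ≤ 2 := by
  rw [diam_le]
  intro x
  rw [ecc_le]
  intro y
  by_cases hxy : x = y
  · rw [hxy, SimpleGraph.dist_self]; omega
  by_cases hxv : x = v
  · subst hxv
    exact le_trans (SimpleGraph.dist_le (Walk.cons (hv y (Ne.intro fun h => hxy h.symm)) Walk.nil)) (by norm_num)
  by_cases hyv : y = v
  · subst hyv
    exact le_trans (SimpleGraph.dist_le (Walk.cons (hv x (Ne.intro hxv)).symm Walk.nil)) (by norm_num)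
  · exact le_trans (SimpleGraph.dist_le (Walk.cons (hv x (Ne.intro hxv)).symm
      (Walk.cons (hv y (Ne.intro hyv)) Walk.nil))) (by norm_num)

/-- If the diameter is at least 4, any vertex of maximum eccentricity has an
improving move to a center, achieving eccentricity at most `⌈D/2⌉ + 1`. -/
lemma center_move (hT : T.IsTree) (hD4 : 4 ≤ diam T) {z : V} (hz : ecc T z = diam T) :
    ∃ T'', IsImproving T T'' z ∧ ecc T'' z ≤ (diam T + 1) / 2 + 1 := by
  classical
  have hne : Nonempty V := ⟨z⟩
  have hzmax : ∀ x, ecc T x ≤ ecc T z := fun x => hz ▸ ecc_le_diam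
  obtain ⟨u, hzu, hzleaf⟩ := leaf_of_max_ecc hT (by omega) hzmax
  obtain ⟨yD, hyD⟩ := exists_ecc (G := T) z
  obtain ⟨p, hp, hpl⟩ := hT.isConnected.exists_path_of_dist z yD
  have hplen : p.length = diam T := by rw [hpl, ← hyD, hz]
  obtain ⟨c, hc⟩ := center_bound hT p hp (fun t => by
    constructor
    · rw [hplen, ← hz]; exact dist_le_ecc
    · rw [hplen]; exact le_trans dist_le_ecc ecc_le_diam)
  rw [hplen] at hc
  have hcz : c ≠ z := by
    intro h
    have := hc yD
    rw [h, ← hyD, hz] at this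
    omega
  obtain ⟨T'', hT''tree, hT''E, hT''leaf, hT''adj⟩ := swap_tree hT hzu hzleaf hcz
  have hdist : ∀ t, T''.dist c t ≤ (diam T + 1) / 2 := by
    intro t
    by_cases ht : t = z
    · rw [ht]
      have h1 : T''.dist c z ≤ 1 :=
        SimpleGraph.dist_le (Walk.cons hT''adj.symm Walk.nil)
      omega
    · rw [show T''.dist c t = T''.dist t c from dist_comm,
        swap_dist_eq hT hT''tree hzleaf hT''E (Ne.intro ht) hcz,
        show T.dist t c = T.dist c t from dist_comm]
      exact hc t
  have hecc : ecc T'' z ≤ (diam T + 1) / 2 + 1 :=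
    ecc_le_of_leaf hT''tree hT''leaf hdist
  refine ⟨T'', ⟨⟨hT''tree, u, c, hzu, hT''E⟩, ?_⟩, hecc⟩
  rw [hz]
  omega

/-- Full analysis of a single max-cost best-response step. -/
lemma step_analysis (hn : 3 ≤ Fintype.card V) (hT : T.IsTree) {v : V}
    (hUv : Unhappy T v) (hmax : ∀ x, Unhappy T x → ecc T x ≤ ecc T v)
    (himp : IsImproving T T' v)
    (hBR : ∀ T'', IsImproving T T'' v → ecc T' v ≤ ecc T'' v) :
    T'.IsTree ∧ diam T' ≤ diam T ∧
      ecc T' v < ecc T v ∧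
      ecc T' v ≤ KK (diam T) ∧
      (∀ x, ecc T' x ≤ max (ecc T x) (KK (diam T))) ∧
      (ecc T' v ≤ 1 → ∀ x, ¬ Unhappy T' x) ∧
      (2 ≤ ecc T' v → ecc T v = diam T) := by
  classical
  obtain ⟨⟨hT', u₀, w₀, hvu₀, hE⟩, hlt⟩ := himp
  have h2v : 2 ≤ ecc T v := unhappy_two_le_ecc (by omega) hUv
  have hstarcase : ecc T' v ≤ 1 → ∀ x, ¬ Unhappy T' x := by
    intro hstar
    exact star_no_unhappy hT' (univ_of_ecc_le_one hT'.isConnected hstar)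
  by_cases hstar : ecc T' v ≤ 1
  · have hvuniv := univ_of_ecc_le_one hT'.isConnected hstar
    have hd2 : diam T' ≤ 2 := univ_diam_le_two hvuniv
    have hdT : 2 ≤ diam T := two_le_diam hT hn
    have hKK := two_le_KK (diam T)
    refine ⟨hT', by omega, hlt, by omega, ?_, hstarcase, by omega⟩
    intro x
    have h1 : ecc T' x ≤ 2 := le_trans ecc_le_diam hd2
    omega
  · push_neg at hstar
    have h3v : 3 ≤ ecc T v := by omega
    have hvd : ecc T v = diam T := by
      rcases Nat.lt_or_ge (diam T) 4 with hD | hD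
      · have := ecc_le_diam (G := T) (x := v)
        omega
      · have hne : Nonempty V := ⟨v⟩
        obtain ⟨z, hz⟩ := exists_diam (G := T)
        obtain ⟨Tz, hTzimp, -⟩ := center_move hT hD hz.symm
        have h1 : ecc T z ≤ ecc T v := hmax z ⟨Tz, hTzimp⟩
        have h2 : ecc T v ≤ diam T := ecc_le_diam
        omega
    have hvmax : ∀ x, ecc T x ≤ ecc T v := fun x => hvd ▸ ecc_le_diam
    obtain ⟨u, hvu, hvleaf⟩ := leaf_of_max_ecc hT (by omega) hvmax
    have hu₀ : u₀ = u := hvleaf u₀ hvu₀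
    rw [hu₀] at hE
    have hBRb : ecc T' v ≤ KK (diam T) := by
      rcases Nat.lt_or_ge (diam T) 4 with hD | hD
      · have hKKv : KK (diam T) = 2 := by unfold KK; split <;> omega
        omega
      · obtain ⟨T'', hT''imp, hT''e⟩ := center_move hT hD hvd
        have hb := hBR T'' hT''imp
        have hKKv : KK (diam T) = (diam T + 1) / 2 + 1 := by unfold KK; split <;> omega
        omega
    have hcreep : ∀ x, ecc T' x ≤ max (ecc T x) (KK (diam T)) := fun x =>
      le_trans (swap_ecc_le hT hT' hvleaf hE x) (max_le_max le_rfl hBRb)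
    have hdmono : diam T' ≤ diam T := by
      rw [diam_le]
      intro x
      have h2 : ecc T x ≤ diam T := ecc_le_diam
      have h3 : KK (diam T) ≤ diam T := le_of_lt (KK_lt (by omega))
      exact le_trans (hcreep x) (max_le h2 h3)
    exact ⟨hT', hdmono, hlt, hBRb, hcreep, hstarcase, fun _ => hvd⟩

end Game2



end AuxProof

/-- the Max Swap Game on any n-vertex tree under the max cost
policy converges within O(n log n) moves: any play of max-cost best-response
moves from a tree has length O(n log n). -/
theorem stmt12 :
    ∃ C : ℝ, 0 < C ∧ ∀ n : ℕ, 2 ≤ n →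
      ∀ (L : ℕ) (f : Fin (L + 1) → SimpleGraph (Fin n)),
        (f 0).IsTree →
        (∀ i : Fin L, MaxCostBRStep (f i.castSucc) (f i.succ)) →
        (L : ℝ) ≤ C * n * Real.log n := by
  classical
  refine ⟨8, by norm_num, ?_⟩
  intro n hn L f h0 hsteps
  have hlogn : (0:ℝ) ≤ Real.log n := Real.log_nonneg (by exact_mod_cast hn.trans' (by norm_num))
  -- ℕ bound first
  have key : L ≤ n * (Nat.log 2 n + 3) := by
    set F : ℕ → SimpleGraph (Fin n) := fun i => f ⟨min i L, by omega⟩ with hF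
    have hstep : ∀ i, i < L → MaxCostBRStep (F i) (F (i+1)) := by
      intro i hi
      have e1 : F i = f ((⟨i, hi⟩ : Fin L).castSucc) := by
        show f _ = f _
        congr 1
        apply Fin.ext
        simp [Nat.min_eq_left hi.le]
      have e2 : F (i+1) = f ((⟨i, hi⟩ : Fin L).succ) := by
        show f _ = f _
        congr 1
        apply Fin.ext
        simp [Nat.min_eq_left (by omega : i + 1 ≤ L)]
      rw [e1, e2]
      exact hsteps ⟨i, hi⟩
    have hF0 : F 0 = f 0 := by
      show f _ = f _
      congr 1
    have hcard : Fintype.card (Fin n) = n := Fintype.card_fin n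
    -- all graphs in the play are trees
    have htree : ∀ i, i ≤ L → (F i).IsTree := by
      intro i
      induction i with
      | zero => intro _; rw [hF0]; exact h0
      | succ i ih =>
        intro hi
        obtain ⟨v, -, -, ⟨⟨hT', -⟩, -⟩, -⟩ := hstep i (by omega)
        exact hT'
    by_cases hn3 : 3 ≤ n
    · -- main case
      have hcard3 : 3 ≤ Fintype.card (Fin n) := by omega
      -- choose the movers
      choose vm hvm1 hvm2 hvm3 hvm4 using hstep
      set vm' : ℕ → Fin n := fun i => if h : i < L then vm i h else ⟨0, by omega⟩ with hvm'def
      have hvm' : ∀ i (h : i < L), vm' i = vm i h := fun i h => dif_pos h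
      -- step analysis at every step
      have hSA : ∀ i (h : i < L),
          diam (F (i+1)) ≤ diam (F i) ∧
          ecc (F (i+1)) (vm' i) < ecc (F i) (vm' i) ∧
          ecc (F (i+1)) (vm' i) ≤ KK (diam (F i)) ∧
          (∀ x, ecc (F (i+1)) x ≤ max (ecc (F i) x) (KK (diam (F i)))) ∧
          (ecc (F (i+1)) (vm' i) ≤ 1 → ∀ x, ¬ Unhappy (F (i+1)) x) ∧
          (2 ≤ ecc (F (i+1)) (vm' i) → ecc (F i) (vm' i) = diam (F i)) := by
        intro i h
        rw [hvm' i h]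
        obtain ⟨h1, h2, h3, h4, h5, h6, h7⟩ :=
          step_analysis hcard3 (htree i h.le) (hvm1 i h) (hvm2 i h) (hvm3 i h) (hvm4 i h)
        exact ⟨h2, h3, h4, h5, h6, h7⟩
      -- diameters are monotone
      have hdm : ∀ i j, i ≤ j → j ≤ L → diam (F j) ≤ diam (F i) := by
        intro i j hij
        induction j with
        | zero =>
          intro _
          have hi0 : i = 0 := Nat.le_zero.1 hij
          rw [hi0]
        | succ j ih =>
          intro hjL
          by_cases hij' : i = j + 1
          · rw [hij']
          · have h1 := (hSA j (by omega)).1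
            have h2 := ih (by omega) (by omega)
            omega
      -- a step creating a vertex of ecc ≤ 1 is the last step
      have hlast : ∀ i (h : i < L), ecc (F (i+1)) (vm' i) ≤ 1 → i + 1 = L := by
        intro i h h1
        by_contra hne
        have h2 : i + 1 < L := by omega
        exact ((hSA i h).2.2.2.2.1 h1) (vm (i+1) h2) (hvm1 (i+1) h2)
      -- once an agent moves, its cost stays below the halving bound
      have hcreepall : ∀ i (h : i < L) t, i < t → t ≤ L →
          ecc (F t) (vm' i) ≤ KK (diam (F i)) := by
        intro i h t
        induction t with
        | zero => omega
        | succ t ih =>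
          intro hit htL
          by_cases hti : t = i
          · rw [hti]
            exact (hSA i h).2.2.1
          · have hti' : i < t := by omega
            have htL' : t < L := by omega
            by_cases hse : ecc (F (t+1)) (vm' t) ≤ 1
            · -- star: everything at most 2
              have huniv := univ_of_ecc_le_one (htree (t+1) (by omega)).isConnected hse
              have hd2 : diam (F (t+1)) ≤ 2 := univ_diam_le_two huniv
              have := two_le_KK (diam (F i))
              have hee : ecc (F (t+1)) (vm' i) ≤ diam (F (t+1)) := ecc_le_diam
              omega
            · have hcz := (hSA t htL').2.2.2.1 (vm' i)
              have h1 : ecc (F t) (vm' i) ≤ KK (diam (F i)) := ih hti' (by omega)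
              have h2 : KK (diam (F t)) ≤ KK (diam (F i)) :=
                KK_mono (hdm i t hti'.le htL'.le)
              exact le_trans hcz (max_le h1 h2)
      -- pairwise relation between successive moves of the same agent
      set c : ℕ → ℕ := fun i => ecc (F i) (vm' i) with hc
      have hpair : ∀ i j, i < L → j < L → i < j → vm' i = vm' j →
          3 ≤ c i ∧ c j ≤ KK (c i) := by
        intro i j hi hj hij hv
        have h2ci : 2 ≤ c i := by
          have := unhappy_two_le_ecc (T := F i) (by omega) (hvm' i hi ▸ hvm1 i hi)
          exact this
        have h2cj : 2 ≤ c j := by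
          have := unhappy_two_le_ecc (T := F j) (by omega) (hvm' j hj ▸ hvm1 j hj)
          exact this
        have hnotstar : ¬ (ecc (F (i+1)) (vm' i) ≤ 1) := by
          intro hstar
          have := hlast i hi hstar
          omega
        have hcieq : c i = ecc (F i) (vm' i) := rfl
        have hcjeq : c j = ecc (F j) (vm' j) := rfl
        have h3 : 3 ≤ c i := by
          rcases Nat.lt_or_ge (c i) 3 with h | h
          · exfalso
            apply hnotstar
            have := (hSA i hi).2.1
            omega
          · exact h
        have hdiam : ecc (F i) (vm' i) = diam (F i) := by
          apply (hSA i hi).2.2.2.2.2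
          omega
        have hcj : ecc (F j) (vm' i) ≤ KK (diam (F i)) :=
          hcreepall i hi j hij hj.le
        rw [hv] at hcj
        refine ⟨h3, ?_⟩
        rw [hc]
        simp only
        rw [← hdiam] at hcj
        exact hcj
      -- counting per agent
      have hfiber : ∀ x : Fin n,
          ((Finset.range L).filter (fun i => vm' i = x)).card ≤ Nat.log 2 n + 3 := by
        intro x
        set Mx := (Finset.range L).filter (fun i => vm' i = x) with hMx
        have hmem : ∀ i ∈ Mx, i < L ∧ vm' i = x := by
          intro i hi
          rw [hMx, Finset.mem_filter, Finset.mem_range] at hi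
          exact hi
        set A4 := Mx.filter (fun i => 4 ≤ c i) with hA4
        set A3 := Mx.filter (fun i => c i = 3) with hA3
        set A2 := Mx.filter (fun i => c i ≤ 2) with hA2
        have hsub : Mx ⊆ A4 ∪ (A3 ∪ A2) := by
          intro i hi
          rcases Nat.lt_or_ge (c i) 3 with h | h
          · exact Finset.mem_union_right _ (Finset.mem_union_right _
              (Finset.mem_filter.2 ⟨hi, by omega⟩))
          · rcases Nat.lt_or_ge (c i) 4 with h' | h'
            · exact Finset.mem_union_right _ (Finset.mem_union_left _
                (Finset.mem_filter.2 ⟨hi, by omega⟩))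
            · exact Finset.mem_union_left _ (Finset.mem_filter.2 ⟨hi, h'⟩)
        have hA2card : A2.card ≤ 1 := by
          rw [Finset.card_le_one]
          intro i hi j hj
          rw [hA2, Finset.mem_filter] at hi hj
          rcases lt_trichotomy i j with h | h | h
          · exfalso
            have := hpair i j (hmem i hi.1).1 (hmem j hj.1).1 h
              (by rw [(hmem i hi.1).2, (hmem j hj.1).2])
            omega
          · exact h
          · exfalso
            have := hpair j i (hmem j hj.1).1 (hmem i hi.1).1 h
              (by rw [(hmem i hi.1).2, (hmem j hj.1).2])
            omega
        have hA3card : A3.card ≤ 1 := by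
          rw [Finset.card_le_one]
          intro i hi j hj
          rw [hA3, Finset.mem_filter] at hi hj
          have hKK3 : KK 3 = 2 := by unfold KK; split <;> omega
          rcases lt_trichotomy i j with h | h | h
          · exfalso
            have := hpair i j (hmem i hi.1).1 (hmem j hj.1).1 h
              (by rw [(hmem i hi.1).2, (hmem j hj.1).2])
            rw [hi.2] at this
            omega
          · exact h
          · exfalso
            have := hpair j i (hmem j hj.1).1 (hmem i hi.1).1 h
              (by rw [(hmem i hi.1).2, (hmem j hj.1).2])
            rw [hj.2] at this
            omega
        have hA4card : A4.card ≤ Nat.log 2 n + 1 := by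
          have hcb : ∀ i ∈ A4, c i ≤ n := by
            intro i hi
            rw [hA4, Finset.mem_filter] at hi
            have h1 : c i ≤ Fintype.card (Fin n) - 1 :=
              ecc_le_card (htree i (hmem i hi.1).1.le).isConnected _
            omega
          have hanti : ∀ i ∈ A4, ∀ j ∈ A4, i < j →
              Nat.log 2 (c j - 3) < Nat.log 2 (c i - 3) := by
            intro i hi j hj hij
            rw [hA4, Finset.mem_filter] at hi hj
            obtain ⟨h3i, hKKij⟩ := hpair i j (hmem i hi.1).1 (hmem j hj.1).1 hij
              (by rw [(hmem i hi.1).2, (hmem j hj.1).2])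
            have hhalf : c j - 3 ≤ (c i - 3) / 2 := by
              have h4i : 4 ≤ c i := hi.2
              have hKKv : KK (c i) = (c i + 1) / 2 + 1 := by unfold KK; split <;> omega
              omega
            have h1 : 2 ≤ c i - 3 := by
              have h4j : 4 ≤ c j := hj.2
              have h4i : 4 ≤ c i := hi.2
              by_contra hcon
              have : c i - 3 ≤ 1 := by omega
              omega
            calc Nat.log 2 (c j - 3) ≤ Nat.log 2 ((c i - 3) / 2) :=
                  Nat.log_mono_right hhalf
              _ = Nat.log 2 (c i - 3) - 1 := Nat.log_div_base 2 (c i - 3)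
              _ < Nat.log 2 (c i - 3) := by
                  have := Nat.log_pos (by norm_num : 1 < 2) h1
                  omega
          apply le_trans (Finset.card_le_card_of_injOn (fun i => Nat.log 2 (c i - 3))
            ?_ ?_)
          · rw [Finset.card_range]
          · intro i hi
            rw [Finset.mem_coe, Finset.mem_range]
            show Nat.log 2 (c i - 3) < Nat.log 2 n + 1
            have : Nat.log 2 (c i - 3) ≤ Nat.log 2 n := Nat.log_mono_right (by
              have := hcb i hi; omega)
            omega
          · intro i hi j hj hgij
            have hgij' : Nat.log 2 (c i - 3) = Nat.log 2 (c j - 3) := hgij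
            rcases lt_trichotomy i j with h | h | h
            · exact absurd hgij' (by have := hanti i hi j hj h; omega)
            · exact h
            · exact absurd hgij' (by have := hanti j hj i hi h; omega)
        calc Mx.card ≤ (A4 ∪ (A3 ∪ A2)).card := Finset.card_le_card hsub
          _ ≤ A4.card + (A3 ∪ A2).card := Finset.card_union_le _ _
          _ ≤ A4.card + (A3.card + A2.card) := by
              have := Finset.card_union_le A3 A2
              omega
          _ ≤ Nat.log 2 n + 3 := by omega
      -- sum over agents
      have hLsum : (Finset.range L).card =
          ∑ x ∈ (Finset.univ : Finset (Fin n)),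
            ((Finset.range L).filter (fun i => vm' i = x)).card :=
        Finset.card_eq_sum_card_fiberwise (fun i _ => Finset.mem_univ (vm' i))
      have : (Finset.range L).card ≤ n * (Nat.log 2 n + 3) := by
        rw [hLsum]
        calc ∑ x ∈ (Finset.univ : Finset (Fin n)),
              ((Finset.range L).filter (fun i => vm' i = x)).card
            ≤ ∑ _x ∈ (Finset.univ : Finset (Fin n)), (Nat.log 2 n + 3) :=
              Finset.sum_le_sum (fun x _ => hfiber x)
          _ = n * (Nat.log 2 n + 3) := by
              rw [Finset.sum_const, Finset.card_univ, hcard, smul_eq_mul]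
      rwa [Finset.card_range] at this
    · -- n = 2 : no steps at all
      have hn2 : n = 2 := by omega
      have hL : L = 0 := by
        by_contra hL0
        have h0' : 0 < L := Nat.pos_of_ne_zero hL0
        obtain ⟨v, hUv, -, -, -⟩ := hstep 0 h0'
        have h2 : 2 ≤ ecc (F 0) v := unhappy_two_le_ecc (by omega) hUv
        have h3 : ecc (F 0) v ≤ Fintype.card (Fin n) - 1 :=
          ecc_le_card (htree 0 (by omega)).isConnected v
        omega
      omega
  -- now the real-number estimate
  have hlog2 : (0.6931471803 : ℝ) < Real.log 2 := Real.log_two_gt_d9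
  have hmono : Real.log 2 ≤ Real.log n := by
    apply Real.log_le_log (by norm_num)
    exact_mod_cast hn
  have hnatlog : (Nat.log 2 n : ℝ) ≤ Real.log n / Real.log 2 := by
    have := Real.natLog_le_logb n 2
    rwa [Real.logb] at this
  have hklog : (Nat.log 2 n : ℝ) * Real.log 2 ≤ Real.log n :=
    (le_div_iff₀ (by linarith)).1 hnatlog
  have hk0 : (0:ℝ) ≤ (Nat.log 2 n : ℝ) := Nat.cast_nonneg _
  have hfin : ((Nat.log 2 n : ℝ) + 3) ≤ 8 * Real.log n := by
    nlinarith [hklog, hlog2, hmono, hk0, hlogn]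
  calc (L:ℝ) ≤ ((n * (Nat.log 2 n + 3) : ℕ) : ℝ) := by exact_mod_cast key
    _ = (n:ℝ) * ((Nat.log 2 n : ℝ) + 3) := by push_cast; ring
    _ ≤ (n:ℝ) * (8 * Real.log n) :=
        mul_le_mul_of_nonneg_left hfin (by positivity)
    _ = 8 * n * Real.log n := by ring

end NCG
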